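/- Let ℒ be the linear span of the functions V ↦ ⟨E_I, V⟩² on G(d,k), where I ranges over k-subsets of {1,…,d} and E_I = Lin{e_i : i ∈ I} for a fixed orthonormal basis e₁,…,e_d of ℝ^d. Define T: ℒ → ℒ by (Tg)(U') = ∫_{G(d,k)} g(U) ⟨U, U'⟩² ν(dU). Then T is a bijective self-adjoint linear operator on ℒ (with respect to the inner product (f,g) = ∫ fg dν), and all eigenvalues of T are nonzero. -/

import Mathlib

open scoped RealInnerProductSpace
open MeasureTheory

/-- The space `⋀_k ℝ^d` of `k`-vectors, in coordinates over `k`-subsets of `{1,…,d}`. -/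
abbrev ExtPow (d k : ℕ) := EuclideanSpace ℝ {s : Finset (Fin d) // s.card = k}

/-- The simple `k`-vector `u₁ ∧ … ∧ u_k` in the coordinate model. -/
noncomputable def simpleWedge {d k : ℕ} (u : Fin k → EuclideanSpace ℝ (Fin d)) :
    ExtPow d k :=
  WithLp.toLp 2 (fun s : {s : Finset (Fin d) // s.card = k} =>
    Matrix.det (Matrix.of fun i j : Fin k => u i (s.1.orderIsoOfFin s.2 j)))

/-- Orthonormal `k`-frames in `ℝ^d`, realizing the Grassmannian `G(d,k)` via spans;
functions on `G(d,k)` are realized as functions of frames (all functions considered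
below depend only on the spanned subspace). -/
abbrev Stiefel (d k : ℕ) := {u : Fin k → EuclideanSpace ℝ (Fin d) // Orthonormal ℝ u}

namespace CB

open Matrix Finset Equiv

variable {d k : ℕ}

abbrev Idx (d k : ℕ) := {s : Finset (Fin d) // s.card = k}

def emb (s : Idx d k) : Fin k → Fin d := fun j => (s.1.orderIsoOfFin s.2 j : Fin d)

lemma emb_injective (s : Idx d k) : Function.Injective (emb s) := fun i j h => by
  simpa [emb, Subtype.ext_iff] using (s.1.orderIsoOfFin s.2).injective (Subtype.ext h)

lemma emb_mem (s : Idx d k) (j : Fin k) : emb s j ∈ s.1 := (s.1.orderIsoOfFin s.2 j).2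

lemma image_emb_univ (s : Idx d k) : Finset.image (emb s) Finset.univ = s.1 := by
  apply Finset.eq_of_subset_of_card_le
  · intro x hx
    simp only [Finset.mem_image] at hx
    obtain ⟨j, _, rfl⟩ := hx
    exact emb_mem s j
  · rw [Finset.card_image_of_injective _ (emb_injective s), Finset.card_univ,
      Fintype.card_fin, s.2]

local notation "ε" σ:max => ((Equiv.Perm.sign σ : ℤ) : ℝ)

theorem sum_zero_of_not_injective (A B : Matrix (Fin k) (Fin d) ℝ) (p : Fin k → Fin d)
    (H : ¬ Function.Injective p) :
    ∑ σ : Equiv.Perm (Fin k), ε σ * ∏ x, A (σ x) (p x) * B x (p x) = 0 := by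
  obtain ⟨i, j, hpij, hij⟩ : ∃ i j, p i = p j ∧ i ≠ j := by
    rw [Function.Injective] at H; push_neg at H; exact H
  exact Finset.sum_involution (fun σ _ => σ * Equiv.swap i j)
    (fun σ _ => by
      have h1 : (∏ x, A (σ x) (p x)) = ∏ x, A ((σ * Equiv.swap i j) x) (p x) :=
        Fintype.prod_equiv (Equiv.swap i j) _ _ (by simp [Equiv.apply_swap_eq_self hpij])
      simp only [Finset.prod_mul_distrib, ← h1, Equiv.Perm.sign_mul,
        Equiv.Perm.sign_swap hij]
      push_cast
      ring)
    (fun σ _ _ => (not_congr Equiv.mul_swap_eq_iff).mpr hij)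
    (fun _ _ => Finset.mem_univ _)
    (fun σ _ => Equiv.mul_swap_involutive i j σ)

theorem sum_perm_eq_det_mul (M N : Matrix (Fin k) (Fin k) ℝ) :
    ∑ τ : Equiv.Perm (Fin k), ∑ σ : Equiv.Perm (Fin k),
      ε σ * ∏ i, M (σ i) (τ i) * N (τ i) i = M.det * N.det :=
  calc
    ∑ τ : Equiv.Perm (Fin k), ∑ σ : Equiv.Perm (Fin k),
        ε σ * ∏ i, M (σ i) (τ i) * N (τ i) i
      = ∑ σ : Equiv.Perm (Fin k), ∑ τ : Equiv.Perm (Fin k),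
        (∏ i, N (σ i) i) * ε τ * ∏ j, M (τ j) (σ j) := by
        simp only [mul_comm, mul_left_comm, Finset.prod_mul_distrib, mul_assoc]
    _ = ∑ σ : Equiv.Perm (Fin k), ∑ τ : Equiv.Perm (Fin k),
        (∏ i, N (σ i) i) * (ε σ * ε τ) * ∏ i, M (τ i) i :=
      Finset.sum_congr rfl fun σ _ =>
        Fintype.sum_equiv (Equiv.mulRight σ⁻¹) _ _ fun τ => by
          have h0 : (∏ j, M (τ j) (σ j)) = ∏ j, M ((τ * σ⁻¹) j) j := by
            rw [← (σ⁻¹ : _ ≃ _).prod_comp]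
            simp only [Equiv.Perm.coe_mul, Equiv.Perm.coe_inv, Equiv.apply_symm_apply, Function.comp_apply]
          have h : ε σ * ε (τ * σ⁻¹) = ε τ :=
            calc
              ε σ * ε (τ * σ⁻¹) = ε (τ * σ⁻¹ * σ) := by
                rw [mul_comm, Equiv.Perm.sign_mul (τ * σ⁻¹)]
                simp only [Int.cast_mul, Units.val_mul]
              _ = ε τ := by simp only [inv_mul_cancel_right]
          simp_rw [Equiv.coe_mulRight, h]
          simp only [h0]
    _ = M.det * N.det := by
      simp only [Matrix.det_apply', Finset.mul_sum, mul_comm, mul_left_comm, mul_assoc]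

noncomputable def sOf (p : Fin k → Fin d) (hp : Function.Injective p) : Idx d k :=
  ⟨Finset.image p Finset.univ, by
    rw [Finset.card_image_of_injective _ hp, Finset.card_univ, Fintype.card_fin]⟩

lemma mem_sOf (p : Fin k → Fin d) (hp : Function.Injective p) (i : Fin k) :
    p i ∈ (sOf p hp).1 := by simp [sOf]

noncomputable def τOf (p : Fin k → Fin d) (hp : Function.Injective p) : Equiv.Perm (Fin k) :=
  Equiv.ofBijective
    (fun i => ((sOf p hp).1.orderIsoOfFin (sOf p hp).2).symm ⟨p i, mem_sOf p hp i⟩)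
    (Finite.injective_iff_bijective.mp (fun i j h => by
      have h2 := congrArg (((sOf p hp).1.orderIsoOfFin (sOf p hp).2)) h
      simp only [OrderIso.apply_symm_apply, Subtype.mk.injEq] at h2
      exact hp h2))

lemma emb_τOf (p : Fin k → Fin d) (hp : Function.Injective p) (i : Fin k) :
    emb (sOf p hp) (τOf p hp i) = p i := by
  simp [emb, τOf, Equiv.ofBijective_apply]

theorem cauchy_binet (A B : Matrix (Fin k) (Fin d) ℝ) :
    (A * Bᵀ).det = ∑ s : Idx d k,
      (Matrix.of fun i j => A i (emb s j)).det * (Matrix.of fun i j => B i (emb s j)).det := by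
  classical
  have step1 : (A * Bᵀ).det
      = ∑ p : Fin k → Fin d, ∑ σ : Equiv.Perm (Fin k),
          ε σ * ∏ i, A (σ i) (p i) * B i (p i) := by
    simp only [Matrix.det_apply', Matrix.mul_apply, Matrix.transpose_apply,
      Finset.prod_univ_sum, Finset.mul_sum, Fintype.piFinset_univ]
    rw [Finset.sum_comm]
  have step2 : (∑ p : Fin k → Fin d, ∑ σ : Equiv.Perm (Fin k),
          ε σ * ∏ i, A (σ i) (p i) * B i (p i))
      = ∑ p ∈ Finset.univ.filter (fun p : Fin k → Fin d => Function.Injective p),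
          ∑ σ : Equiv.Perm (Fin k), ε σ * ∏ i, A (σ i) (p i) * B i (p i) := by
    refine (Finset.sum_subset (Finset.filter_subset _ _) fun p _ hp => ?_).symm
    exact sum_zero_of_not_injective A B p (by simpa using hp)
  have step3 : (∑ p ∈ Finset.univ.filter (fun p : Fin k → Fin d => Function.Injective p),
          ∑ σ : Equiv.Perm (Fin k), ε σ * ∏ i, A (σ i) (p i) * B i (p i))
      = ∑ x : Idx d k × Equiv.Perm (Fin k), ∑ σ : Equiv.Perm (Fin k),
          ε σ * ∏ i, A (σ i) (emb x.1 (x.2 i)) * B i (emb x.1 (x.2 i)) := by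
    refine Finset.sum_bij'
      (fun p hp => (sOf p (Finset.mem_filter.mp hp).2, τOf p (Finset.mem_filter.mp hp).2))
      (fun x _ => fun i => emb x.1 (x.2 i))
      (fun _ _ => Finset.mem_univ _)
      (fun x _ => by
        refine Finset.mem_filter.mpr ⟨Finset.mem_univ _, ?_⟩
        exact (emb_injective x.1).comp x.2.injective)
      (fun p hp => funext fun i => emb_τOf p (Finset.mem_filter.mp hp).2 i)
      (fun x hx => ?_)
      (fun p hp => by
        refine Finset.sum_congr rfl fun σ _ => ?_
        congr 1
        exact Finset.prod_congr rfl fun i _ => by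
          rw [emb_τOf p (Finset.mem_filter.mp hp).2 i])
    · -- right_inv : i (j x) = x
      obtain ⟨s, τ⟩ := x
      have hinj : Function.Injective (fun i => emb s (τ i)) :=
        (emb_injective s).comp τ.injective
      have hs : sOf (fun i => emb s (τ i)) hinj = s := by
        apply Subtype.ext
        show Finset.image (fun i => emb s (τ i)) Finset.univ = s.1
        rw [← image_emb_univ s]
        ext y
        simp only [Finset.mem_image, Finset.mem_univ, true_and]
        constructor
        · rintro ⟨i, rfl⟩; exact ⟨τ i, rfl⟩
        · rintro ⟨i, rfl⟩; exact ⟨τ.symm i, by simp⟩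
      have hemb : ∀ i, emb s (τOf (fun i => emb s (τ i)) hinj i) = emb s (τ i) := by
        intro i
        have h1 := emb_τOf (fun i => emb s (τ i)) hinj i
        rwa [hs] at h1
      have hτ : τOf (fun i => emb s (τ i)) hinj = τ :=
        Equiv.ext fun i => emb_injective s (hemb i)
      exact Prod.ext hs hτ
  have step4 : (∑ x : Idx d k × Equiv.Perm (Fin k), ∑ σ : Equiv.Perm (Fin k),
          ε σ * ∏ i, A (σ i) (emb x.1 (x.2 i)) * B i (emb x.1 (x.2 i)))
      = ∑ s : Idx d k, ∑ τ : Equiv.Perm (Fin k), ∑ σ : Equiv.Perm (Fin k),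
          ε σ * ∏ i, A (σ i) (emb s (τ i)) * B i (emb s (τ i)) := by
    exact Fintype.sum_prod_type _
  rw [step1, step2, step3, step4]
  refine Finset.sum_congr rfl fun s _ => ?_
  have h2 : ((Matrix.of fun i j : Fin k => B j (emb s i)) : Matrix (Fin k) (Fin k) ℝ)
      = (Matrix.of fun i j : Fin k => B i (emb s j))ᵀ := by
    ext i j
    simp
  have h3 := sum_perm_eq_det_mul (Matrix.of fun i j => A i (emb s j))
    (Matrix.of fun i j => B j (emb s i))
  simp only [Matrix.of_apply] at h3
  rw [h3, h2, Matrix.det_transpose]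


theorem inner_simpleWedge (u v : Fin k → EuclideanSpace ℝ (Fin d)) :
    ⟪simpleWedge u, simpleWedge v⟫ = (Matrix.of fun i j : Fin k => ⟪u i, v j⟫).det := by
  have hm : (Matrix.of fun i j : Fin k => (⟪u i, v j⟫ : ℝ))
      = (Matrix.of fun (i : Fin k) (x : Fin d) => u i x)
        * (Matrix.of fun (j : Fin k) (x : Fin d) => v j x)ᵀ := by
    ext i j
    simp [Matrix.mul_apply, PiLp.inner_apply, RCLike.inner_apply, mul_comm]
  rw [hm, cauchy_binet]
  simp only [PiLp.inner_apply, RCLike.inner_apply, conj_trivial]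
  exact Finset.sum_congr rfl fun s _ => mul_comm _ _

noncomputable def bvec (e : Fin d → EuclideanSpace ℝ (Fin d)) (s : Idx d k) : ExtPow d k :=
  simpleWedge (fun t => e (emb s t))

lemma sdiff_nonempty_of_ne {s t : Idx d k} (h : s ≠ t) : ∃ x, x ∈ s.1 ∧ x ∉ t.1 := by
  by_contra hc
  push_neg at hc
  have hsub : s.1 ⊆ t.1 := fun x hx => hc x hx
  have : s.1 = t.1 := Finset.eq_of_subset_of_card_le hsub (by rw [s.2, t.2])
  exact h (Subtype.ext this)

variable {e : Fin d → EuclideanSpace ℝ (Fin d)}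

lemma inner_bvec (he : Orthonormal ℝ e) (s t : Idx d k) :
    ⟪bvec e s, bvec e t⟫ = if s = t then (1:ℝ) else 0 := by
  rw [bvec, bvec, inner_simpleWedge]
  by_cases h : s = t
  · subst h
    have h1 : (Matrix.of fun i j : Fin k => (⟪e (emb s i), e (emb s j)⟫ : ℝ)) = 1 := by
      ext i j
      simp only [Matrix.of_apply, Matrix.one_apply, orthonormal_iff_ite.mp he,
        (emb_injective s).eq_iff]
    rw [h1, Matrix.det_one, if_pos rfl]
  · obtain ⟨x, hxs, hxt⟩ := sdiff_nonempty_of_ne h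
    rw [if_neg h]
    apply Matrix.det_eq_zero_of_row_eq_zero ((s.1.orderIsoOfFin s.2).symm ⟨x, hxs⟩)
    intro j
    have hx : emb s ((s.1.orderIsoOfFin s.2).symm ⟨x, hxs⟩) = x := by
      simp [emb]
    rw [Matrix.of_apply, hx, orthonormal_iff_ite.mp he]
    have : x ≠ emb t j := fun hc => hxt (hc ▸ emb_mem t j)
    simp [this]

lemma orthonormal_bvec (he : Orthonormal ℝ e) : Orthonormal ℝ (fun s : Idx d k => bvec e s) :=
  orthonormal_iff_ite.mpr (inner_bvec he)

noncomputable def wedgeBasis (he : Orthonormal ℝ e) :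
    OrthonormalBasis (Idx d k) ℝ (ExtPow d k) :=
  OrthonormalBasis.mk (orthonormal_bvec he)
    (by
      have li : LinearIndependent ℝ (fun s : Idx d k => bvec e s) :=
        (orthonormal_bvec he).linearIndependent
      have h1 : Submodule.span ℝ (Set.range fun s : Idx d k => bvec e s) = ⊤ := by
        apply Submodule.eq_top_of_finrank_eq
        rw [finrank_span_eq_card li, finrank_euclideanSpace]
      rw [h1])

lemma wedgeBasis_apply (he : Orthonormal ℝ e) (s : Idx d k) : wedgeBasis he s = bvec e s := by
  simp [wedgeBasis, OrthonormalBasis.coe_mk]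

lemma inner_expand (he : Orthonormal ℝ e) (x y : ExtPow d k) :
    (⟪x, y⟫ : ℝ) = ∑ s : Idx d k, ⟪x, bvec e s⟫ * ⟪bvec e s, y⟫ := by
  have h := (wedgeBasis he).sum_inner_mul_inner x y
  simp only [wedgeBasis_apply] at h
  exact h.symm

noncomputable def refl (e : Fin d → EuclideanSpace ℝ (Fin d)) (j : Fin d) :
    EuclideanSpace ℝ (Fin d) ≃ₗᵢ[ℝ] EuclideanSpace ℝ (Fin d) :=
  Submodule.reflection ((ℝ ∙ (e j))ᗮ)

lemma refl_apply_ne (he : Orthonormal ℝ e) {i j : Fin d} (h : i ≠ j) : refl e j (e i) = e i := by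
  apply Submodule.reflection_mem_subspace_eq_self
  rw [Submodule.mem_orthogonal_singleton_iff_inner_right, orthonormal_iff_ite.mp he]
  simp [h.symm]

lemma refl_apply_self (j : Fin d) : refl e j (e j) = - e j :=
  Submodule.reflection_mem_subspace_orthogonalComplement_eq_neg
    ((ℝ ∙ (e j)).le_orthogonal_orthogonal (Submodule.mem_span_singleton_self _))

lemma refl_selfadjoint (j : Fin d) (x y : EuclideanSpace ℝ (Fin d)) :
    (⟪refl e j x, y⟫ : ℝ) = ⟪x, refl e j y⟫ := by
  conv_lhs => rw [← Submodule.reflection_reflection ((ℝ ∙ (e j))ᗮ) y]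
  exact (refl e j).inner_map_map x _

lemma flip_inner (he : Orthonormal ℝ e) (u : Fin k → EuclideanSpace ℝ (Fin d)) (j : Fin d)
    (s : Idx d k) :
    ⟪bvec e s, simpleWedge (fun t => refl e j (u t))⟫
      = (if j ∈ s.1 then (-1:ℝ) else 1) * ⟪bvec e s, simpleWedge u⟫ := by
  rw [bvec, inner_simpleWedge, inner_simpleWedge]
  have key : ∀ i t : Fin k, (⟪e (emb s i), refl e j (u t)⟫ : ℝ)
      = (if emb s i = j then (-1:ℝ) else 1) * ⟪e (emb s i), u t⟫ := by
    intro i t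
    rw [← refl_selfadjoint]
    by_cases h : emb s i = j
    · rw [if_pos h, h, refl_apply_self, inner_neg_left, neg_one_mul]
    · rw [refl_apply_ne he h, if_neg h, one_mul]
  by_cases hj : j ∈ s.1
  · rw [if_pos hj]
    have hm : (Matrix.of fun i t : Fin k => (⟪e (emb s i), refl e j (u t)⟫ : ℝ))
        = Matrix.of fun i t : Fin k =>
            (if emb s i = j then (-1:ℝ) else 1)
              * (Matrix.of fun i t : Fin k => (⟪e (emb s i), u t⟫ : ℝ)) i t := by
      ext i t
      simp only [Matrix.of_apply]
      exact key i t
    rw [hm, Matrix.det_mul_column]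
    congr 1
    have hi0 : emb s ((s.1.orderIsoOfFin s.2).symm ⟨j, hj⟩) = j := by simp [emb]
    rw [Finset.prod_eq_single ((s.1.orderIsoOfFin s.2).symm ⟨j, hj⟩)]
    · rw [if_pos hi0]
    · intro i _ hne
      rw [if_neg]
      intro hc
      exact hne (emb_injective s (by rw [hc, hi0]))
    · intro h; exact absurd (Finset.mem_univ _) h
  · rw [if_neg hj, one_mul]
    have hm : (Matrix.of fun i t : Fin k => (⟪e (emb s i), refl e j (u t)⟫ : ℝ))
        = Matrix.of fun i t : Fin k => (⟪e (emb s i), u t⟫ : ℝ) := by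
      ext i t
      simp only [Matrix.of_apply]
      rw [key i t, if_neg, one_mul]
      intro hc
      exact hj (hc ▸ emb_mem s i)
    rw [hm]


instance : BorelSpace (Stiefel d k) := Subtype.borelSpace _

lemma isCompact_setOf_orthonormal :
    IsCompact {u : Fin k → EuclideanSpace ℝ (Fin d) | Orthonormal ℝ u} := by
  apply Metric.isCompact_of_isClosed_isBounded
  · have h1 : {u : Fin k → EuclideanSpace ℝ (Fin d) | Orthonormal ℝ u}
        = ⋂ (i : Fin k), ⋂ (j : Fin k),
            {u : Fin k → EuclideanSpace ℝ (Fin d) |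
              (inner ℝ (u i) (u j) : ℝ) = if i = j then 1 else 0} := by
      ext u
      simp only [Set.mem_setOf_eq, Set.mem_iInter, orthonormal_iff_ite]
    rw [h1]
    exact isClosed_iInter fun i => isClosed_iInter fun j =>
      isClosed_eq (Continuous.inner (continuous_apply i) (continuous_apply j)) continuous_const
  · apply Bornology.IsBounded.subset (Metric.isBounded_closedBall
      (x := (0 : Fin k → EuclideanSpace ℝ (Fin d))) (r := 1))
    intro u hu
    rw [Metric.mem_closedBall, dist_zero_right]
    exact pi_norm_le_iff_of_nonneg zero_le_one |>.mpr fun i => le_of_eq (hu.1 i)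

instance : CompactSpace (Stiefel d k) := isCompact_iff_compactSpace.mp isCompact_setOf_orthonormal

lemma continuous_simpleWedge :
    Continuous (fun u : Fin k → EuclideanSpace ℝ (Fin d) => simpleWedge u) := by
  have h : Continuous (fun u : Fin k → EuclideanSpace ℝ (Fin d) =>
      (fun s : Idx d k => Matrix.det (Matrix.of fun i j : Fin k => u i (emb s j)))) := by
    apply continuous_pi
    intro s
    apply Continuous.matrix_det
    apply continuous_matrix
    intro i j
    exact ((continuous_apply (emb s j)).comp (PiLp.continuous_ofLp 2 _)).comp
      (continuous_apply i)
  exact (PiLp.continuous_toLp 2 (fun _ : Idx d k => ℝ)).comp h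

lemma continuous_sw : Continuous (fun u : Stiefel d k => simpleWedge u.1) :=
  continuous_simpleWedge.comp continuous_subtype_val

lemma exists_isometry_of_frames (hk : k ≤ d) (u v : Stiefel d k) :
    ∃ ρ : EuclideanSpace ℝ (Fin d) ≃ₗᵢ[ℝ] EuclideanSpace ℝ (Fin d),
      ∀ t, ρ (u.1 t) = v.1 t := by
  have card : Module.finrank ℝ (EuclideanSpace ℝ (Fin d)) = Fintype.card (Fin d) := by
    simp [finrank_euclideanSpace]
  have hbase : ∀ w : Stiefel d k, ∃ b : OrthonormalBasis (Fin d) ℝ (EuclideanSpace ℝ (Fin d)),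
      ∀ t : Fin k, b ⟨t.1, lt_of_lt_of_le t.2 hk⟩ = w.1 t := by
    intro w
    set S : Set (Fin d) := {i : Fin d | (i : ℕ) < k} with hS
    set vv : Fin d → EuclideanSpace ℝ (Fin d) :=
      fun i => if h : (i : ℕ) < k then w.1 ⟨i, h⟩ else 0 with hvv
    have hrestrict : Orthonormal ℝ (S.restrict vv) := by
      have heq : S.restrict vv = w.1 ∘ (fun i : S => (⟨i.1.1, i.2⟩ : Fin k)) := by
        funext i
        simp only [Set.restrict_apply, hvv, Function.comp_apply]
        exact dif_pos i.2
      rw [heq]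
      exact w.2.comp _ (fun i j h => by
        apply Subtype.ext; apply Fin.ext
        simpa using congrArg Fin.val h)
    obtain ⟨b, hb⟩ := hrestrict.exists_orthonormalBasis_extension_of_card_eq card
    refine ⟨b, fun t => ?_⟩
    have hmem : (⟨t.1, lt_of_lt_of_le t.2 hk⟩ : Fin d) ∈ S := t.2
    rw [hb _ hmem, hvv]
    exact dif_pos t.2
  obtain ⟨bu, hbu⟩ := hbase u
  obtain ⟨bv, hbv⟩ := hbase v
  refine ⟨bu.repr.trans bv.repr.symm, fun t => ?_⟩
  rw [LinearIsometryEquiv.trans_apply, ← hbu t, OrthonormalBasis.repr_self,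
    OrthonormalBasis.repr_symm_single, hbv t]


section Main

variable {e : Fin d → EuclideanSpace ℝ (Fin d)}

noncomputable def aF (e : Fin d → EuclideanSpace ℝ (Fin d)) (s : Idx d k) :
    Stiefel d k → ℝ := fun u => ⟪bvec e s, simpleWedge u.1⟫

noncomputable def phi (e : Fin d → EuclideanSpace ℝ (Fin d)) (s : Idx d k) :
    Stiefel d k → ℝ := fun u => (aF e s u) ^ 2

lemma continuous_aF (s : Idx d k) : Continuous (aF e s) :=
  Continuous.inner continuous_const continuous_sw

lemma continuous_phi (s : Idx d k) : Continuous (phi e s) := (continuous_aF s).pow 2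

variable (μ : Measure (Stiefel d k)) [IsProbabilityMeasure μ]

lemma cont_integrable {f : Stiefel d k → ℝ} (hf : Continuous f) : Integrable f μ :=
  hf.integrable_of_hasCompactSupport (HasCompactSupport.of_compactSpace f)

/-- The map on frames induced by an isometry. -/
noncomputable def stiefelMap (ρ : EuclideanSpace ℝ (Fin d) ≃ₗᵢ[ℝ] EuclideanSpace ℝ (Fin d)) :
    Stiefel d k → Stiefel d k :=
  fun u => ⟨fun t => ρ (u.1 t), orthonormal_iff_ite.mpr (fun a b => by
    rw [LinearIsometryEquiv.inner_map_map]
    exact orthonormal_iff_ite.mp u.2 a b)⟩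

lemma continuous_stiefelMap (ρ : EuclideanSpace ℝ (Fin d) ≃ₗᵢ[ℝ] EuclideanSpace ℝ (Fin d)) :
    Continuous (stiefelMap (k := k) ρ) :=
  Continuous.subtype_mk (continuous_pi fun t =>
    ρ.continuous.comp ((continuous_apply t).comp continuous_subtype_val)) _

lemma stiefelMap_prop (ρ : EuclideanSpace ℝ (Fin d) ≃ₗᵢ[ℝ] EuclideanSpace ℝ (Fin d)) :
    ∀ (u : Stiefel d k) (t : Fin k), ((stiefelMap ρ u).1 t) = ρ (u.1 t) := fun _ _ => rfl

lemma aF_flip (he : Orthonormal ℝ e) (j : Fin d) (s : Idx d k) (u : Stiefel d k) :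
    aF e s (stiefelMap (refl e j) u) = (if j ∈ s.1 then (-1:ℝ) else 1) * aF e s u :=
  flip_inner he u.1 j s

lemma phi_flip (he : Orthonormal ℝ e) (j : Fin d) (s : Idx d k) (u : Stiefel d k) :
    phi e s (stiefelMap (refl e j) u) = phi e s u := by
  rw [phi, phi, aF_flip he]
  by_cases h : j ∈ s.1 <;> simp [h] <;> ring

lemma mem_L_continuous {g : Stiefel d k → ℝ}
    (hg : g ∈ Submodule.span ℝ (Set.range (phi e))) : Continuous g := by
  induction hg using Submodule.span_induction with
  | mem f hf => obtain ⟨s, rfl⟩ := hf; exact continuous_phi s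
  | zero => exact continuous_const
  | add f g _ _ hf hg => exact hf.add hg
  | smul r f _ hf => exact hf.const_smul r

lemma mem_L_flip {g : Stiefel d k → ℝ} (he : Orthonormal ℝ e)
    (hg : g ∈ Submodule.span ℝ (Set.range (phi e))) (j : Fin d) (u : Stiefel d k) :
    g (stiefelMap (refl e j) u) = g u := by
  induction hg using Submodule.span_induction with
  | mem f hf => obtain ⟨s, rfl⟩ := hf; exact phi_flip he j s u
  | zero => rfl
  | add f g _ _ hf hg => simp only [Pi.add_apply, hf, hg]
  | smul r f _ hf => simp only [Pi.smul_apply, hf]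

lemma integral_flip_inv (hmap : Measure.map (stiefelMap (k := k) (refl e j)) μ = μ)
    {h : Stiefel d k → ℝ} (hc : Continuous h) :
    ∫ u, h (stiefelMap (refl e j) u) ∂μ = ∫ u, h u ∂μ := by
  conv_rhs => rw [← hmap]
  rw [integral_map (continuous_stiefelMap _).measurable.aemeasurable hc.aestronglyMeasurable]

lemma cross_zero (he : Orthonormal ℝ e)
    (hmap : ∀ j : Fin d, Measure.map (stiefelMap (k := k) (refl e j)) μ = μ)
    {s t : Idx d k} (hst : s ≠ t) {g : Stiefel d k → ℝ}
    (hg : g ∈ Submodule.span ℝ (Set.range (phi e))) :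
    ∫ u, g u * (aF e s u * aF e t u) ∂μ = 0 := by
  obtain ⟨j, hjs, hjt⟩ := sdiff_nonempty_of_ne hst
  have hgc := mem_L_continuous hg
  have hcont : Continuous (fun u => g u * (aF e s u * aF e t u)) :=
    hgc.mul ((continuous_aF s).mul (continuous_aF t))
  have h1 := integral_flip_inv (j := j) μ (hmap j) hcont
  have h2 : ∀ u, g (stiefelMap (refl e j) u)
      * (aF e s (stiefelMap (refl e j) u) * aF e t (stiefelMap (refl e j) u))
      = - (g u * (aF e s u * aF e t u)) := by
    intro u
    rw [mem_L_flip he hg, aF_flip he, aF_flip he, if_pos hjs, if_neg hjt]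
    ring
  simp only [h2, integral_neg] at h1
  linarith

noncomputable def mcoef (e : Fin d → EuclideanSpace ℝ (Fin d)) (μ : Measure (Stiefel d k))
    (g : Stiefel d k → ℝ) (s : Idx d k) : ℝ := ∫ u, g u * phi e s u ∂μ

lemma T_expand (he : Orthonormal ℝ e)
    (hmap : ∀ j : Fin d, Measure.map (stiefelMap (k := k) (refl e j)) μ = μ)
    {g : Stiefel d k → ℝ} (hg : g ∈ Submodule.span ℝ (Set.range (phi e)))
    (u' : Stiefel d k) :
    ∫ u, g u * (⟪simpleWedge u.1, simpleWedge u'.1⟫ : ℝ) ^ 2 ∂μ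
      = ∑ s : Idx d k, mcoef e μ g s * phi e s u' := by
  have hgc := mem_L_continuous hg
  have hQ : ∀ u : Stiefel d k, (⟪simpleWedge u.1, simpleWedge u'.1⟫ : ℝ)
      = ∑ s : Idx d k, aF e s u * aF e s u' := by
    intro u
    rw [inner_expand he]
    exact Finset.sum_congr rfl fun s _ => by
      rw [aF, aF, real_inner_comm]
  have hintegrand : ∀ u, g u * (⟪simpleWedge u.1, simpleWedge u'.1⟫ : ℝ) ^ 2
      = ∑ s : Idx d k, ∑ t : Idx d k,
          g u * (aF e s u * aF e t u) * (aF e s u' * aF e t u') := by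
    intro u
    rw [hQ u, sq, Finset.sum_mul_sum, Finset.mul_sum]
    refine Finset.sum_congr rfl fun s _ => ?_
    rw [Finset.mul_sum]
    exact Finset.sum_congr rfl fun t _ => by ring
  have hint : ∀ s t : Idx d k, Integrable
      (fun u => g u * (aF e s u * aF e t u) * (aF e s u' * aF e t u')) μ :=
    fun s t => cont_integrable μ
      (((hgc.mul ((continuous_aF s).mul (continuous_aF t))).mul continuous_const))
  calc ∫ u, g u * (⟪simpleWedge u.1, simpleWedge u'.1⟫ : ℝ) ^ 2 ∂μ
      = ∫ u, ∑ s : Idx d k, ∑ t : Idx d k,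
          g u * (aF e s u * aF e t u) * (aF e s u' * aF e t u') ∂μ := by
        congr 1; funext u; exact hintegrand u
    _ = ∑ s : Idx d k, ∑ t : Idx d k,
          ∫ u, g u * (aF e s u * aF e t u) * (aF e s u' * aF e t u') ∂μ := by
        rw [integral_finset_sum _ (fun s _ => integrable_finset_sum _ (fun t _ => hint s t))]
        exact Finset.sum_congr rfl fun s _ => integral_finset_sum _ (fun t _ => hint s t)
    _ = ∑ s : Idx d k, ∑ t : Idx d k,
          (∫ u, g u * (aF e s u * aF e t u) ∂μ) * (aF e s u' * aF e t u') := by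
        refine Finset.sum_congr rfl fun s _ => Finset.sum_congr rfl fun t _ => ?_
        exact integral_mul_const _ _
    _ = ∑ s : Idx d k, mcoef e μ g s * phi e s u' := by
        refine Finset.sum_congr rfl fun s _ => ?_
        rw [Finset.sum_eq_single s]
        · congr 1
          · rw [mcoef]
            congr 1; funext u; rw [phi, sq]
          · rw [phi, sq]
        · intro t _ hts
          rw [cross_zero μ he hmap (Ne.symm hts) hg, zero_mul]
        · intro h; exact absurd (Finset.mem_univ _) h

lemma T_expand_fun (he : Orthonormal ℝ e)
    (hmap : ∀ j : Fin d, Measure.map (stiefelMap (k := k) (refl e j)) μ = μ)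
    {g : Stiefel d k → ℝ} (hg : g ∈ Submodule.span ℝ (Set.range (phi e))) :
    (fun u' : Stiefel d k =>
        ∫ u, g u * (⟪simpleWedge u.1, simpleWedge u'.1⟫ : ℝ) ^ 2 ∂μ)
      = ∑ s : Idx d k, mcoef e μ g s • phi e s := by
  funext u'
  rw [T_expand μ he hmap hg u']
  rw [Finset.sum_apply]
  exact Finset.sum_congr rfl fun s _ => rfl

lemma sum_expansion_integral (c : Idx d k → ℝ) {g : Stiefel d k → ℝ} (hgc : Continuous g) :
    ∫ u, (∑ s : Idx d k, c s * phi e s u) * g u ∂μ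
      = ∑ s : Idx d k, c s * mcoef e μ g s := by
  have h1 : ∀ u, (∑ s : Idx d k, c s * phi e s u) * g u
      = ∑ s : Idx d k, c s * (g u * phi e s u) := by
    intro u
    rw [Finset.sum_mul]
    exact Finset.sum_congr rfl fun s _ => by ring
  calc ∫ u, (∑ s : Idx d k, c s * phi e s u) * g u ∂μ
      = ∫ u, ∑ s : Idx d k, c s * (g u * phi e s u) ∂μ := by
        congr 1; funext u; exact h1 u
    _ = ∑ s : Idx d k, ∫ u, c s * (g u * phi e s u) ∂μ :=
        integral_finset_sum _ (fun s _ => (cont_integrable μ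
          (continuous_const.mul (hgc.mul (continuous_phi s)))))
    _ = ∑ s : Idx d k, c s * mcoef e μ g s := by
        refine Finset.sum_congr rfl fun s _ => ?_
        rw [mcoef, integral_const_mul]

lemma isOpenPosMeasure_of_inv (hk : k ≤ d)
    (hmapρ : ∀ ρ : EuclideanSpace ℝ (Fin d) ≃ₗᵢ[ℝ] EuclideanSpace ℝ (Fin d),
      Measure.map (stiefelMap (k := k) ρ) μ = μ) : μ.IsOpenPosMeasure := by
  constructor
  intro U hU hne hzero
  obtain ⟨u₀, hu₀⟩ := hne
  have hF : ∀ v : Stiefel d k, ∃ ρ : EuclideanSpace ℝ (Fin d) ≃ₗᵢ[ℝ] EuclideanSpace ℝ (Fin d),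
      stiefelMap (k := k) ρ v = u₀ := by
    intro v
    obtain ⟨ρ, hρ⟩ := exists_isometry_of_frames hk v u₀
    exact ⟨ρ, Subtype.ext (funext fun t => hρ t)⟩
  choose F hFspec using hF
  have hcover : (Set.univ : Set (Stiefel d k))
      ⊆ ⋃ v : Stiefel d k, (stiefelMap (F v)) ⁻¹' U := by
    intro v _
    exact Set.mem_iUnion.mpr ⟨v, by simp [Set.mem_preimage, hFspec v, hu₀]⟩
  obtain ⟨I, hI⟩ := isCompact_univ.elim_finite_subcover
    (fun v : Stiefel d k => stiefelMap (F v) ⁻¹' U)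
    (fun v => hU.preimage (continuous_stiefelMap (F v))) hcover
  have hz : ∀ v ∈ I, μ (stiefelMap (F v) ⁻¹' U) = 0 := by
    intro v _
    rw [← Measure.map_apply (continuous_stiefelMap (F v)).measurable hU.measurableSet,
      hmapρ (F v)]
    exact hzero
  have hle := (measure_mono hI).trans (measure_biUnion_finset_le (μ := μ) I _)
  rw [measure_univ] at hle
  have : ∑ v ∈ I, μ (stiefelMap (F v) ⁻¹' U) = 0 :=
    Finset.sum_eq_zero hz
  rw [this] at hle
  simpa using hle

lemma ker_zero (he : Orthonormal ℝ e)
    (hmap : ∀ j : Fin d, Measure.map (stiefelMap (k := k) (refl e j)) μ = μ)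
    (hpos : μ.IsOpenPosMeasure)
    {g : Stiefel d k → ℝ} (hg : g ∈ Submodule.span ℝ (Set.range (phi e)))
    (h0 : (fun u' : Stiefel d k =>
        ∫ u, g u * (⟪simpleWedge u.1, simpleWedge u'.1⟫ : ℝ) ^ 2 ∂μ) = 0) :
    g = 0 := by
  haveI := hpos
  have hgc := mem_L_continuous hg
  have hm : ∀ s : Idx d k, mcoef e μ g s = 0 := by
    have h2 : ∀ u' : Stiefel d k, ∑ s : Idx d k, mcoef e μ g s * phi e s u' = 0 := by
      intro u'
      rw [← T_expand μ he hmap hg u']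
      exact congrFun h0 u'
    have hsum : ∑ s : Idx d k, mcoef e μ g s * mcoef e μ g s = 0 := by
      calc ∑ s : Idx d k, mcoef e μ g s * mcoef e μ g s
          = ∫ u', (∑ s : Idx d k, mcoef e μ g s * phi e s u') * g u' ∂μ :=
            (sum_expansion_integral μ _ hgc).symm
        _ = ∫ _u', (0:ℝ) ∂μ := by
            congr 1; funext u'; rw [h2 u', zero_mul]
        _ = 0 := integral_zero _ _
    intro s
    exact mul_self_eq_zero.mp
      ((Finset.sum_eq_zero_iff_of_nonneg
        (fun s _ => mul_self_nonneg (mcoef e μ g s))).mp hsum s (Finset.mem_univ s))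
  obtain ⟨c, hc⟩ := (Submodule.mem_span_range_iff_exists_fun ℝ).mp hg
  have hg2 : ∫ u, g u * g u ∂μ = 0 := by
    have h3 : ∀ u, g u * g u = (∑ s : Idx d k, c s * phi e s u) * g u := by
      intro u
      have := congrFun hc u
      rw [Finset.sum_apply] at this
      simp only [Pi.smul_apply, smul_eq_mul] at this
      rw [this]
    calc ∫ u, g u * g u ∂μ
        = ∫ u, (∑ s : Idx d k, c s * phi e s u) * g u ∂μ := by
          congr 1; funext u; exact h3 u
      _ = ∑ s : Idx d k, c s * mcoef e μ g s := sum_expansion_integral μ _ hgc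
      _ = 0 := Finset.sum_eq_zero fun s _ => by rw [hm s, mul_zero]
  have hae : (fun u => g u * g u) =ᵐ[μ] 0 :=
    (integral_eq_zero_iff_of_nonneg_ae
      (Filter.Eventually.of_forall fun u => mul_self_nonneg (g u))
      (cont_integrable μ (hgc.mul hgc))).mp hg2
  have hae2 : g =ᵐ[μ] (fun _ => (0:ℝ)) := by
    filter_upwards [hae] with u hu
    exact mul_self_eq_zero.mp hu
  exact (Continuous.ae_eq_iff_eq μ hgc continuous_const).mp hae2

end Main

end CB

/-- Let `ℒ` be the span of the functions `V ↦ ⟨E_I, V⟩²` on `G(d,k)` (`I` a `k`-subset of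
a fixed orthonormal basis `e`), let `ν` be the invariant probability measure on `G(d,k)`,
and let `(Tg)(U') = ∫ g(U) ⟨U,U'⟩² ν(dU)`.  Then `T` maps `ℒ` into `ℒ`, is linear and
self-adjoint w.r.t. `(f,g) = ∫ fg dν`, is bijective on `ℒ`, and all its eigenvalues are
nonzero. -/
theorem operator_T_selfadjoint_bijective (d k : ℕ) (hk : k ≤ d)
    (μ : Measure (Stiefel d k)) (hμ : IsProbabilityMeasure μ)
    (hinv : ∀ ρ : EuclideanSpace ℝ (Fin d) ≃ₗᵢ[ℝ] EuclideanSpace ℝ (Fin d),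
      ∀ f : Stiefel d k → Stiefel d k,
        (∀ u t, (f u).1 t = ρ (u.1 t)) → Measure.map f μ = μ)
    (e : Fin d → EuclideanSpace ℝ (Fin d)) (he : Orthonormal ℝ e)
    (L : Submodule ℝ (Stiefel d k → ℝ))
    (hL : L = Submodule.span ℝ {f : Stiefel d k → ℝ |
      ∃ (I : Finset (Fin d)) (hI : I.card = k),
        f = fun u => ⟪simpleWedge (fun t => e (I.orderIsoOfFin hI t)), simpleWedge u.1⟫ ^ 2})
    (T : (Stiefel d k → ℝ) → (Stiefel d k → ℝ))
    (hT : T = fun g u' => ∫ u : Stiefel d k,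
      g u * ⟪simpleWedge u.1, simpleWedge u'.1⟫ ^ 2 ∂μ) :
    (∀ g ∈ L, T g ∈ L) ∧
    (∀ f ∈ L, ∀ g ∈ L, T (f + g) = T f + T g) ∧
    (∀ r : ℝ, ∀ g ∈ L, T (r • g) = r • T g) ∧
    (∀ f ∈ L, ∀ g ∈ L,
      (∫ u : Stiefel d k, T f u * g u ∂μ) = ∫ u : Stiefel d k, f u * T g u ∂μ) ∧
    (∀ h ∈ L, ∃ g ∈ L, T g = h) ∧
    (∀ g₁ ∈ L, ∀ g₂ ∈ L, T g₁ = T g₂ → g₁ = g₂) ∧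
    (∀ (α : ℝ), ∀ g ∈ L, g ≠ 0 → T g = α • g → α ≠ 0) := by
  classical
  haveI := hμ
  have hsetL : L = Submodule.span ℝ (Set.range (CB.phi e)) := by
    rw [hL]
    congr 1
    ext f
    constructor
    · rintro ⟨I, hI, rfl⟩; exact ⟨⟨I, hI⟩, rfl⟩
    · rintro ⟨s, rfl⟩; exact ⟨s.1, s.2, rfl⟩
  have hmapρ : ∀ ρ : EuclideanSpace ℝ (Fin d) ≃ₗᵢ[ℝ] EuclideanSpace ℝ (Fin d),
      Measure.map (CB.stiefelMap (k := k) ρ) μ = μ := fun ρ =>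
    hinv ρ (CB.stiefelMap ρ) (fun _ _ => rfl)
  have hmap : ∀ j : Fin d, Measure.map (CB.stiefelMap (k := k) (CB.refl e j)) μ = μ :=
    fun j => hmapρ _
  have hpos := CB.isOpenPosMeasure_of_inv μ hk hmapρ
  have hQc : ∀ u' : Stiefel d k,
      Continuous (fun u : Stiefel d k => (⟪simpleWedge u.1, simpleWedge u'.1⟫ : ℝ) ^ 2) :=
    fun u' => (Continuous.inner CB.continuous_sw continuous_const).pow 2
  have hcontL : ∀ g ∈ L, Continuous g := by
    intro g hg
    exact CB.mem_L_continuous (hsetL ▸ hg)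
  -- (1) T maps L to L
  have hTmem : ∀ g ∈ L, (fun u' : Stiefel d k =>
      ∫ u, g u * (⟪simpleWedge u.1, simpleWedge u'.1⟫ : ℝ) ^ 2 ∂μ) ∈ L := by
    intro g hg
    rw [hsetL] at hg ⊢
    rw [CB.T_expand_fun μ he hmap hg]
    exact Submodule.sum_mem _ fun s _ =>
      Submodule.smul_mem _ _ (Submodule.subset_span ⟨s, rfl⟩)
  -- (2) additivity
  have hTadd : ∀ f ∈ L, ∀ g ∈ L,
      (fun u' : Stiefel d k =>
        ∫ u, (f + g) u * (⟪simpleWedge u.1, simpleWedge u'.1⟫ : ℝ) ^ 2 ∂μ)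
      = (fun u' : Stiefel d k =>
          ∫ u, f u * (⟪simpleWedge u.1, simpleWedge u'.1⟫ : ℝ) ^ 2 ∂μ)
        + (fun u' : Stiefel d k =>
          ∫ u, g u * (⟪simpleWedge u.1, simpleWedge u'.1⟫ : ℝ) ^ 2 ∂μ) := by
    intro f hf g hg
    funext u'
    simp only [Pi.add_apply, add_mul]
    exact integral_add
      (CB.cont_integrable μ ((hcontL f hf).mul (hQc u')))
      (CB.cont_integrable μ ((hcontL g hg).mul (hQc u')))
  -- subtraction
  have hTsub : ∀ f ∈ L, ∀ g ∈ L,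
      (fun u' : Stiefel d k =>
        ∫ u, (f - g) u * (⟪simpleWedge u.1, simpleWedge u'.1⟫ : ℝ) ^ 2 ∂μ)
      = (fun u' : Stiefel d k =>
          ∫ u, f u * (⟪simpleWedge u.1, simpleWedge u'.1⟫ : ℝ) ^ 2 ∂μ)
        - (fun u' : Stiefel d k =>
          ∫ u, g u * (⟪simpleWedge u.1, simpleWedge u'.1⟫ : ℝ) ^ 2 ∂μ) := by
    intro f hf g hg
    funext u'
    simp only [Pi.sub_apply, sub_mul]
    exact integral_sub
      (CB.cont_integrable μ ((hcontL f hf).mul (hQc u')))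
      (CB.cont_integrable μ ((hcontL g hg).mul (hQc u')))
  -- (3) scalar
  have hTsmul : ∀ (r : ℝ) (g : Stiefel d k → ℝ),
      (fun u' : Stiefel d k =>
        ∫ u, (r • g) u * (⟪simpleWedge u.1, simpleWedge u'.1⟫ : ℝ) ^ 2 ∂μ)
      = r • (fun u' : Stiefel d k =>
          ∫ u, g u * (⟪simpleWedge u.1, simpleWedge u'.1⟫ : ℝ) ^ 2 ∂μ) := by
    intro r g
    funext u'
    simp only [Pi.smul_apply, smul_eq_mul, mul_assoc]
    exact integral_const_mul r _
  -- kernel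
  have hker : ∀ g ∈ L,
      (fun u' : Stiefel d k =>
        ∫ u, g u * (⟪simpleWedge u.1, simpleWedge u'.1⟫ : ℝ) ^ 2 ∂μ) = 0 → g = 0 := by
    intro g hg h0
    exact CB.ker_zero μ he hmap hpos (hsetL ▸ hg) h0
  -- (6) injectivity
  have hinj2 : ∀ g₁ ∈ L, ∀ g₂ ∈ L,
      (fun u' : Stiefel d k =>
        ∫ u, g₁ u * (⟪simpleWedge u.1, simpleWedge u'.1⟫ : ℝ) ^ 2 ∂μ)
      = (fun u' : Stiefel d k =>
        ∫ u, g₂ u * (⟪simpleWedge u.1, simpleWedge u'.1⟫ : ℝ) ^ 2 ∂μ) → g₁ = g₂ := by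
    intro g₁ hg₁ g₂ hg₂ heq
    have h0 := hTsub g₁ hg₁ g₂ hg₂
    rw [heq, sub_self] at h0
    exact sub_eq_zero.mp (hker (g₁ - g₂) (Submodule.sub_mem L hg₁ hg₂) h0)
  -- (4) self-adjointness
  have hsa : ∀ f ∈ L, ∀ g ∈ L,
      (∫ u, (∫ v, f v * (⟪simpleWedge v.1, simpleWedge u.1⟫ : ℝ) ^ 2 ∂μ) * g u ∂μ)
      = ∫ u, f u * (∫ v, g v * (⟪simpleWedge v.1, simpleWedge u.1⟫ : ℝ) ^ 2 ∂μ) ∂μ := by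
    intro f hf g hg
    have hf' : f ∈ Submodule.span ℝ (Set.range (CB.phi e)) := hsetL ▸ hf
    have hg' : g ∈ Submodule.span ℝ (Set.range (CB.phi e)) := hsetL ▸ hg
    have h1 : (∫ u, (∫ v, f v * (⟪simpleWedge v.1, simpleWedge u.1⟫ : ℝ) ^ 2 ∂μ) * g u ∂μ)
        = ∑ s, CB.mcoef e μ f s * CB.mcoef e μ g s := by
      rw [show (fun u : Stiefel d k =>
            (∫ v, f v * (⟪simpleWedge v.1, simpleWedge u.1⟫ : ℝ) ^ 2 ∂μ) * g u)
          = fun u : Stiefel d k => (∑ s, CB.mcoef e μ f s * CB.phi e s u) * g u from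
        funext fun u => by rw [CB.T_expand μ he hmap hf' u]]
      exact CB.sum_expansion_integral μ _ (hcontL g hg)
    have h2 : (∫ u, f u * (∫ v, g v * (⟪simpleWedge v.1, simpleWedge u.1⟫ : ℝ) ^ 2 ∂μ) ∂μ)
        = ∑ s, CB.mcoef e μ g s * CB.mcoef e μ f s := by
      rw [show (fun u : Stiefel d k =>
            f u * (∫ v, g v * (⟪simpleWedge v.1, simpleWedge u.1⟫ : ℝ) ^ 2 ∂μ))
          = fun u : Stiefel d k => (∑ s, CB.mcoef e μ g s * CB.phi e s u) * f u from
        funext fun u => by rw [CB.T_expand μ he hmap hg' u, mul_comm]]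
      exact CB.sum_expansion_integral μ _ (hcontL f hf)
    rw [h1, h2]
    exact Finset.sum_congr rfl fun s _ => mul_comm _ _
  -- (5) surjectivity
  haveI : FiniteDimensional ℝ L := by
    rw [hsetL]
    exact FiniteDimensional.span_of_finite ℝ (Set.finite_range _)
  have hsurj : ∀ h ∈ L, ∃ g ∈ L,
      (fun u' : Stiefel d k =>
        ∫ u, g u * (⟪simpleWedge u.1, simpleWedge u'.1⟫ : ℝ) ^ 2 ∂μ) = h := by
    set τ : L →ₗ[ℝ] L :=
      { toFun := fun g => ⟨(fun u' : Stiefel d k =>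
          ∫ u, g.1 u * (⟪simpleWedge u.1, simpleWedge u'.1⟫ : ℝ) ^ 2 ∂μ), hTmem g.1 g.2⟩
        map_add' := fun a b => Subtype.ext (hTadd a.1 a.2 b.1 b.2)
        map_smul' := fun r a => Subtype.ext (hTsmul r a.1) } with hτ
    have hτinj : Function.Injective τ := by
      intro a b hab
      exact Subtype.ext (hinj2 a.1 a.2 b.1 b.2 (congrArg Subtype.val hab))
    have hτsurj := LinearMap.surjective_of_injective hτinj
    intro h hh
    obtain ⟨g, hg⟩ := hτsurj ⟨h, hh⟩
    exact ⟨g.1, g.2, congrArg Subtype.val hg⟩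
  subst hT
  refine ⟨hTmem, hTadd, fun r g _ => hTsmul r g, hsa, hsurj, hinj2, ?_⟩
  -- (7) eigenvalues nonzero
  intro α g hg hgne heig hα
  subst hα
  rw [zero_smul] at heig
  exact hgne (hker g hg heig)
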